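/- arXiv:1612.05443 — 3 statements merged into one kernel-verified Lean document; each statement's English description precedes it below -/
import Mathlib

section
/- Let ϑ > 0, κ ≥ 0, μ ≥ 0, ν ≥ 0 and r ≥ 0 be real numbers, let A be a real 3×3 matrix, let t, w ∈ ℝ³, let Y = (Y₁,…,Yₙ) ∈ ℝⁿ with Y_k > 0 for every k, let D = (D_{kl}) be a symmetric positive semidefinite real n×n matrix with D Y = 0, and let G₁,…,Gₙ ∈ ℝ³. Define the Newtonian stress S(A) = μ(A + Aᵀ − (2/3)(tr A) I) + ν (tr A) I and the diffusion fluxes F_k = −Y_k ∑_{l=1}^n D_{kl} G_l. Then the entropy production rate σ := S(A):A/ϑ + κ|t|²/ϑ² − ∑_{k=1}^n F_k · (G_k/Y_k + w) + r/ϑ is nonnegative. -/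
open Matrix

/-- Nonnegativity of the entropy production rate
`σ = S(A):A/ϑ + κ|t|²/ϑ² − ∑_k F_k · (G_k/Y_k + w) + r/ϑ`, where
`S(A) = μ(A + Aᵀ − (2/3)(tr A) I) + ν (tr A) I` is the Newtonian stress and
`F_k = −Y_k ∑_l D_{kl} G_l` are the diffusion fluxes, with `D` symmetric positive
semidefinite and `D Y = 0`, `Y_k > 0`. -/
theorem entropy_production_nonneg (n : ℕ) (hn : 1 ≤ n)
    (ϑ κ μ ν r : ℝ) (hϑ : 0 < ϑ) (hκ : 0 ≤ κ) (hμ : 0 ≤ μ) (hν : 0 ≤ ν) (hr : 0 ≤ r)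
    (A : Matrix (Fin 3) (Fin 3) ℝ) (t w : Fin 3 → ℝ)
    (Y : Fin n → ℝ) (hY : ∀ k, 0 < Y k) (G : Fin n → (Fin 3 → ℝ))
    (D : Matrix (Fin n) (Fin n) ℝ) (hsymm : D.IsSymm)
    (hpsd : ∀ x : Fin n → ℝ, 0 ≤ x ⬝ᵥ D.mulVec x)
    (hker : D.mulVec Y = 0) :
    0 ≤ (∑ i, ∑ j,
          (μ • (A + Aᵀ - ((2 / 3 : ℝ) * A.trace) • (1 : Matrix (Fin 3) (Fin 3) ℝ))
            + (ν * A.trace) • (1 : Matrix (Fin 3) (Fin 3) ℝ)) i j * A i j) / ϑ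
        + κ * (t ⬝ᵥ t) / ϑ ^ 2
        - (∑ k, (-(Y k) • ∑ l, D k l • G l) ⬝ᵥ ((Y k)⁻¹ • G k + w))
        + r / ϑ := by
  -- viscous term
  have hT1 : 0 ≤ (∑ i, ∑ j,
          (μ • (A + Aᵀ - ((2 / 3 : ℝ) * A.trace) • (1 : Matrix (Fin 3) (Fin 3) ℝ))
            + (ν * A.trace) • (1 : Matrix (Fin 3) (Fin 3) ℝ)) i j * A i j) / ϑ := by
    apply div_nonneg _ hϑ.le
    simp only [Fin.sum_univ_three, Matrix.add_apply, Matrix.sub_apply, Matrix.smul_apply,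
      Matrix.transpose_apply, Matrix.one_apply, Matrix.trace_fin_three, smul_eq_mul,
      show ((0:Fin 3) = 2) = False by decide, show ((1:Fin 3) = 2) = False by decide,
      show ((2:Fin 3) = 0) = False by decide, show ((2:Fin 3) = 1) = False by decide,
      show ((0:Fin 3) = 1) = False by decide, show ((1:Fin 3) = 0) = False by decide,
      if_false, if_true]
    nlinarith [mul_nonneg hμ (sq_nonneg (A 0 1 + A 1 0)),
      mul_nonneg hμ (sq_nonneg (A 0 2 + A 2 0)),
      mul_nonneg hμ (sq_nonneg (A 1 2 + A 2 1)),
      mul_nonneg hμ (sq_nonneg (A 0 0 - A 1 1)),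
      mul_nonneg hμ (sq_nonneg (A 1 1 - A 2 2)),
      mul_nonneg hμ (sq_nonneg (A 0 0 - A 2 2)),
      mul_nonneg hν (sq_nonneg (A 0 0 + A 1 1 + A 2 2))]
  have hT2 : 0 ≤ κ * (t ⬝ᵥ t) / ϑ ^ 2 := by
    apply div_nonneg _ (by positivity)
    exact mul_nonneg hκ (Finset.sum_nonneg fun i _ => mul_self_nonneg _)
  have hT4 : 0 ≤ r / ϑ := div_nonneg hr hϑ.le
  -- column sums of D against Y vanish
  have h2 : ∀ l, ∑ k, Y k * D k l = 0 := by
    intro l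
    have h0 : ∑ k, D l k * Y k = 0 := congrFun hker l
    calc ∑ k, Y k * D k l = ∑ k, D l k * Y k := by
          refine Finset.sum_congr rfl fun k _ => ?_
          rw [hsymm.apply l k]; ring
      _ = 0 := h0
  -- per-k identity
  have hk : ∀ k, (-(Y k) • ∑ l, D k l • G l) ⬝ᵥ ((Y k)⁻¹ • G k + w)
      = -((∑ l, D k l • G l) ⬝ᵥ G k) - Y k * ((∑ l, D k l • G l) ⬝ᵥ w) := by
    intro k
    rw [dotProduct_add, smul_dotProduct, smul_dotProduct, dotProduct_smul]
    have : Y k ≠ 0 := (hY k).ne'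
    field_simp
    simp only [smul_eq_mul, one_div, neg_mul, mul_inv_cancel_left₀ this]
    ring
  have hdotw : ∀ k, (∑ l, D k l • G l) ⬝ᵥ w = ∑ l, D k l * (G l ⬝ᵥ w) := by
    intro k
    simp only [dotProduct, Finset.sum_apply, Pi.smul_apply, smul_eq_mul, Finset.mul_sum,
      Finset.sum_mul]
    rw [Finset.sum_comm]
    exact Finset.sum_congr rfl fun l _ => Finset.sum_congr rfl fun c _ => by ring
  have hzero : ∑ k, Y k * ((∑ l, D k l • G l) ⬝ᵥ w) = 0 := by
    have e : ∑ k, Y k * ((∑ l, D k l • G l) ⬝ᵥ w)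
        = ∑ l, (∑ k, Y k * D k l) * (G l ⬝ᵥ w) := by
      simp only [hdotw, Finset.mul_sum, Finset.sum_mul]
      rw [Finset.sum_comm]
      exact Finset.sum_congr rfl fun l _ => Finset.sum_congr rfl fun k _ => by ring
    rw [e]
    simp [h2]
  have hfirst : ∑ k, (∑ l, D k l • G l) ⬝ᵥ G k
      = ∑ c : Fin 3, (fun k => G k c) ⬝ᵥ D.mulVec (fun k => G k c) := by
    simp only [dotProduct, mulVec, Finset.sum_apply, Pi.smul_apply, smul_eq_mul,
      Finset.sum_mul, Finset.mul_sum]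
    rw [Finset.sum_comm]
    exact Finset.sum_congr rfl fun c _ => Finset.sum_congr rfl fun k _ =>
      Finset.sum_congr rfl fun l _ => by ring
  have hT3 : (∑ k, (-(Y k) • ∑ l, D k l • G l) ⬝ᵥ ((Y k)⁻¹ • G k + w)) ≤ 0 := by
    calc (∑ k, (-(Y k) • ∑ l, D k l • G l) ⬝ᵥ ((Y k)⁻¹ • G k + w))
        = -(∑ k, (∑ l, D k l • G l) ⬝ᵥ G k) - ∑ k, Y k * ((∑ l, D k l • G l) ⬝ᵥ w) := by
          rw [← Finset.sum_neg_distrib, ← Finset.sum_sub_distrib]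
          exact Finset.sum_congr rfl fun k _ => hk k
      _ = -(∑ c : Fin 3, (fun k => G k c) ⬝ᵥ D.mulVec (fun k => G k c)) := by
          rw [hzero, hfirst]; ring
      _ ≤ 0 := by
          simp only [neg_nonpos]
          exact Finset.sum_nonneg fun c _ => hpsd _
  linarith
end

section
/- Let Ω ⊂ ℝᴺ be a bounded Lebesgue-measurable set. Let (f_n), (g_n) be sequences of integrable functions on Ω and let f, g, h be integrable functions on Ω such that f_n g_n is integrable for every n. Assume: (i) ∫_Ω |f_n − f| dx → 0; (ii) ∫_Ω g_n φ dx → ∫_Ω g φ dx for every bounded measurable φ : Ω → ℝ; (iii) ∫_Ω f_n g_n φ dx → ∫_Ω h φ dx for every bounded measurable φ : Ω → ℝ. Then h = f g almost everywhere in Ω. -/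
open MeasureTheory Filter
open scoped ENNReal

section helpers

variable {α : Type*} [MeasurableSpace α] {μ : Measure α}

lemma trunc_eq_self {K t : ℝ} (h : |t| ≤ K) : max (-K) (min K t) = t := by
  rw [abs_le] at h
  rw [min_eq_right h.2, max_eq_right h.1]

lemma abs_trunc_le {K t : ℝ} (hK : 0 ≤ K) : |max (-K) (min K t)| ≤ K := by
  rw [abs_le]
  exact ⟨le_max_left _ _, max_le (by linarith) (min_le_left _ _)⟩

lemma MeasureTheory.Integrable.mul_bdd_abs {w φ : α → ℝ} (hw : Integrable w μ)
    (hφ : AEStronglyMeasurable φ μ) {C : ℝ} (hb : ∀ x, |φ x| ≤ C) :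
    Integrable (fun x => w x * φ x) μ := by
  have h := hw.bdd_mul (f := φ) hφ
    (Filter.Eventually.of_forall (fun x => by simpa [Real.norm_eq_abs] using hb x))
  exact h.congr (Filter.Eventually.of_forall fun x => mul_comm _ _)

lemma Lp_top_ae_bound (φ : Lp ℝ ∞ μ) : ∀ᵐ x ∂μ, ‖(φ : α → ℝ) x‖ ≤ ‖φ‖ := by
  filter_upwards [ae_le_eLpNormEssSup (f := (φ : α → ℝ)) (μ := μ)] with x hx
  rw [Lp.norm_def, eLpNorm_exponent_top]
  calc ‖(φ : α → ℝ) x‖ = ((‖(φ : α → ℝ) x‖₊ : ENNReal)).toReal := by simp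
    _ ≤ (eLpNormEssSup (φ : α → ℝ) μ).toReal := by
        refine ENNReal.toReal_mono ?_ hx
        rw [← eLpNorm_exponent_top]
        exact Lp.eLpNorm_ne_top φ

lemma pairing_integrable (w : α → ℝ) (hw : Integrable w μ) (φ : Lp ℝ ∞ μ) :
    Integrable (fun x => w x * (φ : α → ℝ) x) μ := by
  have h := hw.bdd_mul (f := (φ : α → ℝ)) (Lp.aestronglyMeasurable φ) (Lp_top_ae_bound φ)
  exact h.congr (Filter.Eventually.of_forall fun x => mul_comm _ _)

noncomputable def pairingCLM (μ : Measure α) (w : α → ℝ) (hw : Integrable w μ) :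
    Lp ℝ ∞ μ →L[ℝ] ℝ :=
  LinearMap.mkContinuous
    { toFun := fun φ => ∫ x, w x * (φ : α → ℝ) x ∂μ
      map_add' := by
        intro φ ψ
        rw [← integral_add (pairing_integrable w hw φ) (pairing_integrable w hw ψ)]
        refine integral_congr_ae ?_
        filter_upwards [Lp.coeFn_add φ ψ] with x hx
        rw [hx, Pi.add_apply]; ring
      map_smul' := by
        intro c φ
        simp only [RingHom.id_apply]
        rw [smul_eq_mul, ← integral_const_mul]
        refine integral_congr_ae ?_
        filter_upwards [Lp.coeFn_smul c φ] with x hx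
        rw [hx, Pi.smul_apply, smul_eq_mul]
        ring }
    (∫ x, |w x| ∂μ)
    (by
      intro φ
      simp only [LinearMap.coe_mk, AddHom.coe_mk]
      calc ‖∫ x, w x * (φ : α → ℝ) x ∂μ‖ ≤ ∫ x, ‖w x * (φ : α → ℝ) x‖ ∂μ :=
            norm_integral_le_integral_norm _
        _ ≤ ∫ x, |w x| * ‖φ‖ ∂μ := by
            refine integral_mono_ae (pairing_integrable w hw φ).norm (hw.abs.mul_const _) ?_
            filter_upwards [Lp_top_ae_bound φ] with x hx
            rw [norm_mul, Real.norm_eq_abs]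
            exact mul_le_mul_of_nonneg_left hx (abs_nonneg _)
        _ = (∫ x, |w x| ∂μ) * ‖φ‖ := integral_mul_const _ _)

lemma pairingCLM_apply (μ : Measure α) (w : α → ℝ) (hw : Integrable w μ) (φ : Lp ℝ ∞ μ) :
    pairingCLM μ w hw φ = ∫ x, w x * (φ : α → ℝ) x ∂μ := rfl

lemma l1_bound (μ : Measure α) (g : ℕ → α → ℝ) (hg : ∀ n, Integrable (g n) μ)
    (hb : ∀ φ : α → ℝ, Measurable φ → (∃ C : ℝ, ∀ x, |φ x| ≤ C) →
      ∃ C : ℝ, ∀ n, |∫ x, g n x * φ x ∂μ| ≤ C) :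
    ∃ M : ℝ, 0 ≤ M ∧ ∀ n, ∫ x, |g n x| ∂μ ≤ M := by
  set T : ℕ → (Lp ℝ ∞ μ →L[ℝ] ℝ) := fun n => pairingCLM μ (g n) (hg n) with hT
  have hpt : ∀ φ : Lp ℝ ∞ μ, ∃ C, ∀ n, ‖T n φ‖ ≤ C := by
    intro φ
    set C₀ := ‖φ‖ with hC₀def
    have hC₀ : 0 ≤ C₀ := norm_nonneg φ
    set ψ : α → ℝ := fun x => max (-C₀) (min C₀ ((φ : α → ℝ) x)) with hψdef
    have hψm : Measurable ψ :=
      measurable_const.max (measurable_const.min (Lp.stronglyMeasurable φ).measurable)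
    have hψb : ∀ x, |ψ x| ≤ C₀ := fun x => abs_trunc_le hC₀
    have hψae : (φ : α → ℝ) =ᵐ[μ] ψ := by
      filter_upwards [Lp_top_ae_bound φ] with x hx
      exact (trunc_eq_self (by simpa [Real.norm_eq_abs] using hx)).symm
    obtain ⟨C, hC⟩ := hb ψ hψm ⟨C₀, hψb⟩
    refine ⟨C, fun n => ?_⟩
    have heq : T n φ = ∫ x, g n x * ψ x ∂μ := by
      rw [hT, pairingCLM_apply]
      refine integral_congr_ae ?_
      filter_upwards [hψae] with x hx
      rw [hx]
    rw [Real.norm_eq_abs, heq]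
    exact hC n
  obtain ⟨C', hC'⟩ := banach_steinhaus hpt
  refine ⟨max C' 0, le_max_right _ _, fun n => ?_⟩
  set G := (hg n).1.mk (g n) with hGdef
  have hGm : Measurable G := (hg n).1.stronglyMeasurable_mk.measurable
  have hGe : g n =ᵐ[μ] G := (hg n).1.ae_eq_mk
  set s : α → ℝ := fun x => if 0 ≤ G x then 1 else -1 with hsdef
  have hsm : Measurable s :=
    Measurable.ite (measurableSet_le measurable_const hGm) measurable_const measurable_const
  have hsb : ∀ x, ‖s x‖ ≤ 1 := by
    intro x
    by_cases h : 0 ≤ G x <;> simp [hsdef, h]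
  have hmem : MemLp s ∞ μ :=
    memLp_top_of_bound hsm.aestronglyMeasurable 1 (Filter.Eventually.of_forall hsb)
  have hnorm : ‖hmem.toLp s‖ ≤ 1 := by
    rw [Lp.norm_toLp]
    have h1 : eLpNorm s ∞ μ ≤ ENNReal.ofReal 1 := by
      rw [eLpNorm_exponent_top]
      exact eLpNormEssSup_le_of_ae_bound (Filter.Eventually.of_forall hsb)
    calc (eLpNorm s ∞ μ).toReal ≤ (ENNReal.ofReal 1).toReal :=
          ENNReal.toReal_mono (by simp) h1
      _ = 1 := by simp
  have happ : T n (hmem.toLp s) = ∫ x, |g n x| ∂μ := by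
    rw [hT, pairingCLM_apply]
    refine integral_congr_ae ?_
    filter_upwards [hmem.coeFn_toLp, hGe] with x hx hx2
    rw [hx, hx2]
    by_cases h : 0 ≤ G x
    · simp [hsdef, h, abs_of_nonneg h]
    · push_neg at h
      simp [hsdef, not_le.2 h, abs_of_neg h]
  calc ∫ x, |g n x| ∂μ = T n (hmem.toLp s) := happ.symm
    _ ≤ ‖T n (hmem.toLp s)‖ := le_abs_self _
    _ ≤ ‖T n‖ * ‖hmem.toLp s‖ := (T n).le_opNorm _
    _ ≤ C' * 1 := mul_le_mul (hC' n) hnorm (norm_nonneg _) ((norm_nonneg (T n)).trans (hC' n))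
    _ = C' := mul_one _
    _ ≤ max C' 0 := le_max_left _ _

end helpers

/-- Lemma of Jesslé–Novotný–Pokorný: on a bounded measurable `Ω ⊂ ℝᴺ`, if `f_n → f`
strongly in `L¹(Ω)`, `g_n ⇀ g` weakly in `L¹(Ω)` (tested against all bounded measurable
functions), and `f_n g_n ⇀ h` weakly in `L¹(Ω)`, then `h = f g` a.e. in `Ω`. -/
theorem weak_limit_of_product (N : ℕ) (Ω : Set (Fin N → ℝ))
    (hΩmeas : MeasurableSet Ω) (hΩbdd : Bornology.IsBounded Ω)
    (f g : ℕ → (Fin N → ℝ) → ℝ) (f₀ g₀ h : (Fin N → ℝ) → ℝ)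
    (hf : ∀ n, IntegrableOn (f n) Ω) (hg : ∀ n, IntegrableOn (g n) Ω)
    (hfg : ∀ n, IntegrableOn (fun x => f n x * g n x) Ω)
    (hf₀ : IntegrableOn f₀ Ω) (hg₀ : IntegrableOn g₀ Ω) (hh : IntegrableOn h Ω)
    (hstrong : Tendsto (fun n => ∫ x in Ω, |f n x - f₀ x|) atTop (nhds 0))
    (hweakg : ∀ φ : (Fin N → ℝ) → ℝ, Measurable φ → (∃ C : ℝ, ∀ x, |φ x| ≤ C) →
      Tendsto (fun n => ∫ x in Ω, g n x * φ x) atTop (nhds (∫ x in Ω, g₀ x * φ x)))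
    (hweakfg : ∀ φ : (Fin N → ℝ) → ℝ, Measurable φ → (∃ C : ℝ, ∀ x, |φ x| ≤ C) →
      Tendsto (fun n => ∫ x in Ω, f n x * g n x * φ x) atTop
        (nhds (∫ x in Ω, h x * φ x))) :
    ∀ᵐ x ∂(volume.restrict Ω), h x = f₀ x * g₀ x := by
  set μ : Measure (Fin N → ℝ) := volume.restrict Ω with hμdef
  haveI : IsFiniteMeasure μ := ⟨by
    rw [hμdef, Measure.restrict_apply_univ]
    exact hΩbdd.measure_lt_top⟩
  -- measurable representatives
  set F : ℕ → (Fin N → ℝ) → ℝ := fun n => (hf n).1.mk (f n) with hFdef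
  have hFsm : ∀ n, StronglyMeasurable (F n) := fun n => (hf n).1.stronglyMeasurable_mk
  have hFae : ∀ n, f n =ᵐ[μ] F n := fun n => (hf n).1.ae_eq_mk
  set F₀ : (Fin N → ℝ) → ℝ := hf₀.1.mk f₀ with hF₀def
  have hF₀sm : StronglyMeasurable F₀ := hf₀.1.stronglyMeasurable_mk
  have hF₀ae : f₀ =ᵐ[μ] F₀ := hf₀.1.ae_eq_mk
  set G₀ : (Fin N → ℝ) → ℝ := hg₀.1.mk g₀ with hG₀def
  have hG₀sm : StronglyMeasurable G₀ := hg₀.1.stronglyMeasurable_mk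
  have hG₀ae : g₀ =ᵐ[μ] G₀ := hg₀.1.ae_eq_mk
  set H : (Fin N → ℝ) → ℝ := hh.1.mk h with hHdef
  have hHsm : StronglyMeasurable H := hh.1.stronglyMeasurable_mk
  have hHae : h =ᵐ[μ] H := hh.1.ae_eq_mk
  -- Step A : uniform L¹ bound on g n
  obtain ⟨M, hM0, hM⟩ : ∃ M : ℝ, 0 ≤ M ∧ ∀ n, ∫ x, |g n x| ∂μ ≤ M := by
    refine l1_bound μ g hg ?_
    intro φ hφm hφb
    have ht2 := (hweakg φ hφm hφb).abs
    obtain ⟨C, hC⟩ := ht2.bddAbove_range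
    exact ⟨C, fun n => hC ⟨n, rfl⟩⟩
  -- Step B : a.e. convergent subsequence
  have heL : Tendsto (fun n => eLpNorm (f n - f₀) 1 μ) atTop (nhds 0) := by
    have h1 : ∀ n, eLpNorm (f n - f₀) 1 μ = ENNReal.ofReal (∫ x, |f n x - f₀ x| ∂μ) := by
      intro n
      rw [eLpNorm_one_eq_lintegral_enorm,
        ← ofReal_integral_norm_eq_lintegral_enorm ((hf n).sub hf₀)]
      simp [Real.norm_eq_abs]
      rfl
    simp only [h1]
    have h2 := ENNReal.tendsto_ofReal (f := atTop) hstrong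
    simpa using h2
  have hmeasconv : TendstoInMeasure μ f atTop f₀ :=
    tendstoInMeasure_of_tendsto_eLpNorm one_ne_zero (fun n => (hf n).1) hf₀.1 heL
  obtain ⟨ns, hns, hae⟩ := hmeasconv.exists_seq_tendsto_ae
  have haeF : ∀ᵐ x ∂μ, Tendsto (fun i => F (ns i) x) atTop (nhds (F₀ x)) := by
    have hall : ∀ᵐ x ∂μ, ∀ n, f n x = F n x := ae_all_iff.2 hFae
    filter_upwards [hae, hall, hF₀ae] with x hx h1 h2
    rw [← h2]
    exact hx.congr fun i => h1 (ns i)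
  -- Step C+D : for each m, an exceptional set and a.e. identification
  have key : ∀ m : ℕ, ∃ t : Set (Fin N → ℝ), MeasurableSet t ∧
      μ t ≤ ENNReal.ofReal (1 / (m + 1)) ∧
      (∀ᵐ x ∂μ, (x ∈ tᶜ ∧ |F₀ x| ≤ (m : ℝ)) → H x = F₀ x * G₀ x) := by
    intro m
    obtain ⟨t, htm, htμ, hunif⟩ :=
      tendstoUniformlyOn_of_ae_tendsto' (fun i => hFsm (ns i)) hF₀sm haeF
        (ε := 1 / (m + 1)) (by positivity)
    set K : ℝ := (m : ℝ) with hKdef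
    have hK0 : (0 : ℝ) ≤ K := Nat.cast_nonneg m
    set τ : ℝ → ℝ := fun u => max (-K) (min K u) with hτdef
    have hτm : Measurable fun x => τ (F₀ x) :=
      measurable_const.max (measurable_const.min hF₀sm.measurable)
    set S : Set (Fin N → ℝ) := tᶜ ∩ {x | |F₀ x| ≤ K} with hSdef
    have hSmeas : MeasurableSet S :=
      htm.compl.inter (measurableSet_le hF₀sm.measurable.abs measurable_const)
    -- the key limit identity
    have hkey : ∀ φ : (Fin N → ℝ) → ℝ, Measurable φ → (∀ x, |φ x| ≤ 1) →
        (∀ x, x ∉ S → φ x = 0) →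
        ∫ x, h x * φ x ∂μ = ∫ x, g₀ x * (τ (F₀ x) * φ x) ∂μ := by
      intro φ hφm hφb hφs
      set ψ : (Fin N → ℝ) → ℝ := fun x => τ (F₀ x) * φ x with hψdef
      have hψm : Measurable ψ := hτm.mul hφm
      have hψb : ∀ x, |ψ x| ≤ K := by
        intro x
        rw [hψdef]
        simp only []
        rw [abs_mul]
        calc |τ (F₀ x)| * |φ x| ≤ K * 1 :=
              mul_le_mul (abs_trunc_le hK0) (hφb x) (abs_nonneg _) hK0
          _ = K := mul_one K
      have L1 : Tendsto (fun k => ∫ x, f (ns k) x * g (ns k) x * φ x ∂μ) atTop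
          (nhds (∫ x, h x * φ x ∂μ)) :=
        (hweakfg φ hφm ⟨1, hφb⟩).comp hns.tendsto_atTop
      have L2 : Tendsto (fun k => ∫ x, g (ns k) x * ψ x ∂μ) atTop
          (nhds (∫ x, g₀ x * ψ x ∂μ)) :=
        (hweakg ψ hψm ⟨K, hψb⟩).comp hns.tendsto_atTop
      have L3 : Tendsto (fun k => ∫ x, f (ns k) x * g (ns k) x * φ x ∂μ
          - ∫ x, g (ns k) x * ψ x ∂μ) atTop (nhds 0) := by
        rw [NormedAddCommGroup.tendsto_nhds_zero]
        intro ε hε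
        set δ : ℝ := ε / (M + 1) with hδdef
        have hδ : 0 < δ := by positivity
        have hunif' := (Metric.tendstoUniformlyOn_iff.mp hunif) δ hδ
        filter_upwards [hunif'] with k hk
        have I1 : Integrable (fun x => f (ns k) x * g (ns k) x * φ x) μ :=
          (hfg (ns k)).mul_bdd_abs hφm.aestronglyMeasurable hφb
        have I2 : Integrable (fun x => g (ns k) x * ψ x) μ :=
          (hg (ns k)).mul_bdd_abs hψm.aestronglyMeasurable hψb
        rw [← integral_sub I1 I2]
        have hbnd : ∀ᵐ x ∂μ, ‖f (ns k) x * g (ns k) x * φ x - g (ns k) x * ψ x‖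
            ≤ δ * |g (ns k) x| := by
          filter_upwards [hFae (ns k)] with x hx
          rw [Real.norm_eq_abs]
          by_cases hxS : x ∈ S
          · have hτx : τ (F₀ x) = F₀ x := trunc_eq_self hxS.2
            have heq2 : f (ns k) x * g (ns k) x * φ x - g (ns k) x * ψ x
                = (F (ns k) x - F₀ x) * g (ns k) x * φ x := by
              rw [hψdef]
              simp only []
              rw [hτx, ← hx]
              ring
            rw [heq2, abs_mul, abs_mul]
            have hd : |F (ns k) x - F₀ x| ≤ δ := by
              have hdist := hk x hxS.1
              rw [Real.dist_eq, abs_sub_comm] at hdist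
              exact hdist.le
            calc |F (ns k) x - F₀ x| * |g (ns k) x| * |φ x|
                ≤ δ * |g (ns k) x| * 1 :=
                  mul_le_mul (mul_le_mul hd le_rfl (abs_nonneg _) hδ.le) (hφb x)
                    (abs_nonneg _) (by positivity)
              _ = δ * |g (ns k) x| := mul_one _
          · have hz := hφs x hxS
            rw [hψdef]
            simp only [hz]
            simp only [mul_zero, zero_sub, abs_neg, mul_zero, abs_zero, sub_zero]
            positivity
        calc ‖∫ x, (f (ns k) x * g (ns k) x * φ x - g (ns k) x * ψ x) ∂μ‖
            ≤ ∫ x, ‖f (ns k) x * g (ns k) x * φ x - g (ns k) x * ψ x‖ ∂μ :=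
              norm_integral_le_integral_norm _
          _ ≤ ∫ x, δ * |g (ns k) x| ∂μ :=
              integral_mono_ae (I1.sub I2).norm ((hg (ns k)).abs.const_mul δ) hbnd
          _ = δ * ∫ x, |g (ns k) x| ∂μ := integral_const_mul _ _
          _ ≤ δ * M := mul_le_mul_of_nonneg_left (hM _) hδ.le
          _ < δ * (M + 1) := by
              have := lt_add_one M
              exact mul_lt_mul_of_pos_left this hδ
          _ = ε := by
              rw [hδdef]
              field_simp
      have hsum := L2.add L3
      have heqfun : (fun k => ∫ x, g (ns k) x * ψ x ∂μ
          + (∫ x, f (ns k) x * g (ns k) x * φ x ∂μ - ∫ x, g (ns k) x * ψ x ∂μ))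
          = fun k => ∫ x, f (ns k) x * g (ns k) x * φ x ∂μ := by
        funext k; ring
      rw [heqfun, add_zero] at hsum
      exact tendsto_nhds_unique L1 hsum
    -- derive the a.e. statement via set integrals
    have hIntH : Integrable H μ := (hh.congr hHae)
    have hIntτG : Integrable (fun x => τ (F₀ x) * G₀ x) μ :=
      (hg₀.congr hG₀ae).bdd_mul hτm.aestronglyMeasurable
        (Filter.Eventually.of_forall fun x => by
          simpa [Real.norm_eq_abs] using abs_trunc_le (t := F₀ x) hK0)
    have hzero : S.indicator (fun y => H y - τ (F₀ y) * G₀ y) =ᵐ[μ] 0 := by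
      have hint : Integrable (S.indicator fun y => H y - τ (F₀ y) * G₀ y) μ :=
        (hIntH.sub hIntτG).indicator hSmeas
      refine hint.ae_eq_zero_of_forall_setIntegral_eq_zero ?_
      intro B hB hBμ
      set φ : (Fin N → ℝ) → ℝ := (S ∩ B).indicator (fun _ => 1) with hφdef
      have hφm : Measurable φ := measurable_const.indicator (hSmeas.inter hB)
      have hφb : ∀ x, |φ x| ≤ 1 := by
        intro x
        by_cases hx : x ∈ S ∩ B <;> simp [hφdef, Set.indicator_apply, hx]
      have hφs : ∀ x, x ∉ S → φ x = 0 := fun x hx =>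
        Set.indicator_of_notMem (fun hmem => hx hmem.1) _
      have h1 := hkey φ hφm hφb hφs
      have e1 : ∫ x, h x * φ x ∂μ = ∫ x in S ∩ B, H x ∂μ := by
        rw [← integral_indicator (hSmeas.inter hB)]
        refine integral_congr_ae ?_
        filter_upwards [hHae] with x hx
        by_cases hmem : x ∈ S ∩ B
        · simp [hφdef, Set.indicator_of_mem hmem, hx]
        · simp [hφdef, Set.indicator_of_notMem hmem]
      have e2 : ∫ x, g₀ x * (τ (F₀ x) * φ x) ∂μ = ∫ x in S ∩ B, τ (F₀ x) * G₀ x ∂μ := by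
        rw [← integral_indicator (hSmeas.inter hB)]
        refine integral_congr_ae ?_
        filter_upwards [hG₀ae] with x hx
        by_cases hmem : x ∈ S ∩ B
        · simp only [hφdef, Set.indicator_of_mem hmem, hx]
          ring
        · simp [hφdef, Set.indicator_of_notMem hmem]
      rw [e1, e2] at h1
      rw [setIntegral_indicator hSmeas, Set.inter_comm B S,
        integral_sub hIntH.integrableOn hIntτG.integrableOn, h1, sub_self]
    refine ⟨t, htm, htμ, ?_⟩
    filter_upwards [hzero] with x hx hxS
    have hxS' : x ∈ S := ⟨hxS.1, hxS.2⟩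
    rw [Set.indicator_of_mem hxS'] at hx
    have hτx : τ (F₀ x) = F₀ x := trunc_eq_self hxS.2
    have : H x - τ (F₀ x) * G₀ x = 0 := hx
    rw [hτx] at this
    linarith
  -- Step E : combine over m
  choose t htmeas htμ htae using key
  set A : ℕ → Set (Fin N → ℝ) := fun m => {x | (m : ℝ) < |F₀ x|} with hAdef
  have hAmeas : ∀ m, MeasurableSet (A m) :=
    fun m => measurableSet_lt measurable_const hF₀sm.measurable.abs
  set B₀ : Set (Fin N → ℝ) := {x | H x ≠ F₀ x * G₀ x} with hB₀def
  have hμB : μ B₀ = 0 := by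
    have hbound : ∀ m : ℕ, μ B₀ ≤ ENNReal.ofReal (1 / (m + 1)) + μ (A m) := by
      intro m
      have h1 : μ (B₀ \ (t m ∪ A m)) = 0 := by
        refine measure_mono_null ?_ (ae_iff.mp (htae m))
        intro x hx
        simp only [Set.mem_setOf_eq]
        intro himp
        rcases hx with ⟨hxB, hxU⟩
        refine hxB ?_
        refine himp ⟨?_, ?_⟩
        · intro hxt
          exact hxU (Or.inl hxt)
        · by_contra hcon
          push_neg at hcon
          exact hxU (Or.inr hcon)
      calc μ B₀ ≤ μ (B₀ \ (t m ∪ A m)) + μ (t m ∪ A m) := by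
            refine (measure_mono ?_).trans (measure_union_le _ _)
            intro x hx
            by_cases hx2 : x ∈ t m ∪ A m
            · exact Or.inr hx2
            · exact Or.inl ⟨hx, hx2⟩
        _ = μ (t m ∪ A m) := by rw [h1, zero_add]
        _ ≤ μ (t m) + μ (A m) := measure_union_le _ _
        _ ≤ ENNReal.ofReal (1 / (m + 1)) + μ (A m) := add_le_add (htμ m) le_rfl
    have htend : Tendsto (fun m : ℕ => ENNReal.ofReal (1 / (m + 1)) + μ (A m)) atTop
        (nhds 0) := by
      have h1 : Tendsto (fun m : ℕ => ENNReal.ofReal (1 / (m + 1 : ℝ))) atTop (nhds 0) := by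
        have h2 := ENNReal.tendsto_ofReal (f := atTop)
          tendsto_one_div_add_atTop_nhds_zero_nat
        simpa using h2
      have h2 : Tendsto (fun m : ℕ => μ (A m)) atTop (nhds 0) := by
        have hanti : Antitone A := by
          intro a b hab x hx
          simp only [hAdef, Set.mem_setOf_eq] at hx ⊢
          exact lt_of_le_of_lt (show (a : ℝ) ≤ (b : ℝ) by exact_mod_cast hab) hx
        have hempty : (⋂ m, A m) = ∅ := by
          ext x
          simp only [Set.mem_iInter, Set.mem_empty_iff_false, iff_false, not_forall]
          obtain ⟨m, hm⟩ := exists_nat_gt |F₀ x|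
          exact ⟨m, by simp [hAdef, not_lt.2 hm.le]⟩
        have h3 := tendsto_measure_iInter_atTop
          (fun m => (hAmeas m).nullMeasurableSet) hanti ⟨0, measure_ne_top μ _⟩
        rw [hempty] at h3
        simpa [Function.comp_def] using h3
      have := h1.add h2
      simpa using this
    exact le_zero_iff.mp (ge_of_tendsto' htend hbound)
  have hHeq : ∀ᵐ x ∂μ, H x = F₀ x * G₀ x := by
    rw [ae_iff]
    exact hμB
  filter_upwards [hHeq, hHae, hF₀ae, hG₀ae] with x h1 h2 h3 h4
  rw [h2, h3, h4]
  exact h1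
end

section
/- Let Ω ⊆ ℝ³ be open, α ∈ (0, 1), a = 2/(2 − α), x₀ ∈ ℝ³, and let d : Ω → (0, ∞) be twice continuously differentiable. Define φ¹ : Ω → ℝ³ by φ¹(x) = d(x) ∇d(x) (d(x) + |x − x₀|^a)^{−α}. Then for every x ∈ Ω with x ≠ x₀ and all i, j ∈ {1,2,3}: ∂_j φ¹_i(x) = d ∂²_{ij} d / (d + |x−x₀|^a)^{α} + [((1−α) d + |x−x₀|^a) / (2 (d + |x−x₀|^a)^{1+α})] ∂_i d ∂_j d + [((1−α) d + |x−x₀|^a) / (2 (d + |x−x₀|^a)^{1+α})] (∂_i d − μ^i)(∂_j d − μ^j) + [α d (∂_j d ∂_i(|x−x₀|^a) − ∂_i d ∂_j(|x−x₀|^a))] / (2 (d + |x−x₀|^a)^{1+α}) − [α² d² ∂_i(|x−x₀|^a) ∂_j(|x−x₀|^a)] / (2 (d + |x−x₀|^a)^{1+α} ((1−α) d + |x−x₀|^a)), where μ^i(x) = α d(x) ((1−α) d(x) + |x−x₀|^a)^{−1} ∂_i(|x−x₀|^a) and all functions on the right are evaluated at x. -/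
open EuclideanSpace

/-- `i`-th partial derivative of a scalar function on `ℝ³`. -/
noncomputable def partialDeriv3 (f : EuclideanSpace ℝ (Fin 3) → ℝ) (i : Fin 3)
    (x : EuclideanSpace ℝ (Fin 3)) : ℝ :=
  fderiv ℝ f x (EuclideanSpace.single i 1)

/-- Jacobian decomposition of the boundary test function
`φ¹(x) = d(x) ∇d(x) (d(x) + |x − x₀|^a)^{−α}` with `a = 2/(2 − α)`, `α ∈ (0,1)`,
`d : Ω → (0,∞)` twice continuously differentiable: for `x ∈ Ω`, `x ≠ x₀`,
`∂_j φ¹_i(x)` equals the displayed five-term expression, where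
`μ^i = α d ((1−α)d + |x−x₀|^a)^{−1} ∂_i(|x−x₀|^a)`. -/
theorem jacobian_boundary_test_function
    (Ω : Set (EuclideanSpace ℝ (Fin 3))) (hΩ : IsOpen Ω)
    (α a : ℝ) (hα0 : 0 < α) (hα1 : α < 1) (ha : a = 2 / (2 - α))
    (x₀ : EuclideanSpace ℝ (Fin 3))
    (d : EuclideanSpace ℝ (Fin 3) → ℝ)
    (hd : ContDiffOn ℝ 2 d Ω) (hdpos : ∀ x ∈ Ω, 0 < d x) :
    ∀ x ∈ Ω, x ≠ x₀ → ∀ i j : Fin 3,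
      fderiv ℝ
          (fun y => d y * partialDeriv3 d i y * (d y + ‖y - x₀‖ ^ a) ^ (-α)) x
          (EuclideanSpace.single j 1)
        = d x * (fderiv ℝ (fun y => partialDeriv3 d i y) x (EuclideanSpace.single j 1))
              / (d x + ‖x - x₀‖ ^ a) ^ α
          + ((1 - α) * d x + ‖x - x₀‖ ^ a) / (2 * (d x + ‖x - x₀‖ ^ a) ^ (1 + α))
              * (partialDeriv3 d i x * partialDeriv3 d j x)
          + ((1 - α) * d x + ‖x - x₀‖ ^ a) / (2 * (d x + ‖x - x₀‖ ^ a) ^ (1 + α))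
              * ((partialDeriv3 d i x
                    - α * d x * ((1 - α) * d x + ‖x - x₀‖ ^ a)⁻¹
                        * partialDeriv3 (fun y => ‖y - x₀‖ ^ a) i x)
                 * (partialDeriv3 d j x
                    - α * d x * ((1 - α) * d x + ‖x - x₀‖ ^ a)⁻¹
                        * partialDeriv3 (fun y => ‖y - x₀‖ ^ a) j x))
          + α * d x * (partialDeriv3 d j x * partialDeriv3 (fun y => ‖y - x₀‖ ^ a) i x
                - partialDeriv3 d i x * partialDeriv3 (fun y => ‖y - x₀‖ ^ a) j x)
              / (2 * (d x + ‖x - x₀‖ ^ a) ^ (1 + α))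
          - α ^ 2 * d x ^ 2 * partialDeriv3 (fun y => ‖y - x₀‖ ^ a) i x
                * partialDeriv3 (fun y => ‖y - x₀‖ ^ a) j x
              / (2 * (d x + ‖x - x₀‖ ^ a) ^ (1 + α) * ((1 - α) * d x + ‖x - x₀‖ ^ a)) := by
  intro x hx hxne i j
  have hmem : Ω ∈ nhds x := hΩ.mem_nhds hx
  have hdx : ContDiffAt ℝ 2 d x := hd.contDiffAt hmem
  have hd1 : DifferentiableAt ℝ d x := hdx.differentiableAt (by norm_num)
  -- differentiability of the i-th partial derivative of d
  have hdi : DifferentiableAt ℝ (fun y => partialDeriv3 d i y) x := by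
    have h1 : ContDiffAt ℝ 1 (fderiv ℝ d) x := hdx.fderiv_right (by norm_num)
    have h2 : ContDiffAt ℝ 1 (fun y => fderiv ℝ d y (EuclideanSpace.single i 1)) x :=
      h1.clm_apply contDiffAt_const
    exact h2.differentiableAt one_ne_zero
  -- basic positivity
  have hsubne : x - x₀ ≠ 0 := sub_ne_zero.mpr hxne
  have hnpos : 0 < ‖x - x₀‖ := norm_pos_iff.mpr hsubne
  have hR : 0 < ‖x - x₀‖ ^ a := Real.rpow_pos_of_pos hnpos a
  have hD : 0 < d x := hdpos x hx
  have hS : 0 < d x + ‖x - x₀‖ ^ a := by linarith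
  have hT : 0 < (1 - α) * d x + ‖x - x₀‖ ^ a := by nlinarith
  -- differentiability of r(y) = ‖y - x₀‖^a
  have hnormd : DifferentiableAt ℝ (fun y : EuclideanSpace ℝ (Fin 3) => ‖y - x₀‖) x :=
    DifferentiableAt.norm ℝ (differentiableAt_id.sub_const x₀) hsubne
  have hr : DifferentiableAt ℝ (fun y : EuclideanSpace ℝ (Fin 3) => ‖y - x₀‖ ^ a) x :=
    hnormd.rpow_const (Or.inl hnpos.ne')
  -- sum s(y) = d y + ‖y - x₀‖^a
  have hsF : HasFDerivAt (fun y => d y + ‖y - x₀‖ ^ a)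
      (fderiv ℝ d x + fderiv ℝ (fun y : EuclideanSpace ℝ (Fin 3) => ‖y - x₀‖ ^ a) x) x :=
    hd1.hasFDerivAt.add hr.hasFDerivAt
  -- g(y) = s(y)^(-α)
  have hgF : HasFDerivAt (fun y => (d y + ‖y - x₀‖ ^ a) ^ (-α))
      ((-α * (d x + ‖x - x₀‖ ^ a) ^ (-α - 1)) •
        (fderiv ℝ d x + fderiv ℝ (fun y : EuclideanSpace ℝ (Fin 3) => ‖y - x₀‖ ^ a) x)) x :=
    hsF.rpow_const (Or.inl hS.ne')
  -- f1(y) = d y * ∂ᵢ d y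
  have hf1F : HasFDerivAt (fun y => d y * partialDeriv3 d i y)
      (d x • fderiv ℝ (fun y => partialDeriv3 d i y) x +
        partialDeriv3 d i x • fderiv ℝ d x) x :=
    hd1.hasFDerivAt.mul hdi.hasFDerivAt
  have hF : HasFDerivAt (fun y => d y * partialDeriv3 d i y * (d y + ‖y - x₀‖ ^ a) ^ (-α))
      ((d x * partialDeriv3 d i x) •
          ((-α * (d x + ‖x - x₀‖ ^ a) ^ (-α - 1)) •
            (fderiv ℝ d x + fderiv ℝ (fun y : EuclideanSpace ℝ (Fin 3) => ‖y - x₀‖ ^ a) x)) +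
        ((d x + ‖x - x₀‖ ^ a) ^ (-α)) •
          (d x • fderiv ℝ (fun y => partialDeriv3 d i y) x +
            partialDeriv3 d i x • fderiv ℝ d x)) x :=
    hf1F.mul hgF
  rw [hF.fderiv]
  -- notation
  set D := d x with hDdef
  set R := ‖x - x₀‖ ^ a with hRdef
  set Pi := partialDeriv3 d i x
  set Pj := partialDeriv3 d j x
  set Qi := partialDeriv3 (fun y => ‖y - x₀‖ ^ a) i x
  set Qj := partialDeriv3 (fun y => ‖y - x₀‖ ^ a) j x
  set H := fderiv ℝ (fun y => partialDeriv3 d i y) x (EuclideanSpace.single j 1)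
  have happ : (fderiv ℝ d x) (EuclideanSpace.single j 1) = Pj := rfl
  have happ2 : (fderiv ℝ (fun y : EuclideanSpace ℝ (Fin 3) => ‖y - x₀‖ ^ a) x)
      (EuclideanSpace.single j 1) = Qj := rfl
  simp only [ContinuousLinearMap.add_apply, ContinuousLinearMap.smul_apply, smul_eq_mul,
    happ, happ2]
  have hH : (fderiv ℝ (fun y => partialDeriv3 d i y) x) (EuclideanSpace.single j 1) = H := rfl
  rw [hH]
  -- rpow identities
  have e3 : (D + R) ^ (1 + α) = (D + R) * (D + R) ^ α := by
    rw [Real.rpow_add hS, Real.rpow_one]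
  have e1 : (D + R) ^ (-α) = ((D + R) ^ α)⁻¹ := by
    rw [Real.rpow_neg hS.le]
  have e2 : (D + R) ^ (-α - 1) = ((D + R) * (D + R) ^ α)⁻¹ := by
    rw [show -α - 1 = -(1 + α) by ring, Real.rpow_neg hS.le, e3]
  rw [e1, e2]
  have hApos : 0 < (D + R) ^ α := Real.rpow_pos_of_pos hS α
  rw [e3]
  have hT' : (1 - α) * D + R ≠ 0 := hT.ne'
  set T := (1 - α) * D + R with hTdef
  have hTn : T ≠ 0 := hT'
  field_simp
  rw [hTdef]
  ring
end
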